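/- arXiv:2303.12778 — 3 statements merged into one kernel-verified Lean document; each statement's English description precedes it below -/
import Mathlib

section
/- For every κ ∈ (0,1), E(κ)² - (1-κ²)K(κ)² > 0, where K and E are the complete elliptic integrals of the first and second kind. -/
open Real

/-- Complete elliptic integral of the first kind. -/
noncomputable def ellipticK (k : ℝ) : ℝ :=
  ∫ θ in (0:ℝ)..(π/2), 1 / Real.sqrt (1 - k^2 * (Real.sin θ)^2)

/-- Complete elliptic integral of the second kind. -/
noncomputable def ellipticE (k : ℝ) : ℝ :=
  ∫ θ in (0:ℝ)..(π/2), Real.sqrt (1 - k^2 * (Real.sin θ)^2)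

/-- For every `κ ∈ (0,1)`, `E(κ)² - (1-κ²)K(κ)² > 0`. -/
theorem ellipticE_sq_sub_gt (κ : ℝ) (hκ : κ ∈ Set.Ioo (0:ℝ) 1) :
    (ellipticE κ)^2 - (1 - κ^2) * (ellipticK κ)^2 > 0 := by
  obtain ⟨h0, h1⟩ := hκ
  have h1κ : (0:ℝ) < 1 - κ^2 := by nlinarith
  set k' : ℝ := Real.sqrt (1 - κ^2) with hk'def
  have hk'pos : 0 < k' := Real.sqrt_pos.mpr h1κ
  have hk'sq : k'^2 = 1 - κ^2 := Real.sq_sqrt h1κ.le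
  set f : ℝ → ℝ := fun θ => 1 - κ^2 * Real.sin θ^2 with hf
  have hfpos : ∀ θ, 0 < f θ := by
    intro θ
    have h := Real.sin_sq_le_one θ
    simp only [hf]
    nlinarith
  have hfc : Continuous f := by
    simp only [hf]; continuity
  have hsqc : Continuous fun θ => Real.sqrt (f θ) := hfc.sqrt
  have hsqpos : ∀ θ, 0 < Real.sqrt (f θ) := fun θ => Real.sqrt_pos.mpr (hfpos θ)
  have hinvc : Continuous fun θ => k' / Real.sqrt (f θ) :=
    continuous_const.div hsqc fun θ => (hsqpos θ).ne'
  have hpi2 : (0:ℝ) < π/2 := by positivity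
  have hI1 : IntervalIntegrable (fun θ => Real.sqrt (f θ)) MeasureTheory.volume 0 (π/2) :=
    hsqc.intervalIntegrable _ _
  have hI2 : IntervalIntegrable (fun θ => k' / Real.sqrt (f θ)) MeasureTheory.volume 0 (π/2) :=
    hinvc.intervalIntegrable _ _
  have hE : ellipticE κ = ∫ θ in (0:ℝ)..(π/2), Real.sqrt (f θ) := by
    unfold ellipticE; simp only [hf]
  have hK : k' * ellipticK κ = ∫ θ in (0:ℝ)..(π/2), k' / Real.sqrt (f θ) := by
    unfold ellipticK
    rw [← intervalIntegral.integral_const_mul]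
    simp only [hf, mul_one_div]
  -- the main integrand for E - k'K
  set g : ℝ → ℝ := fun θ => Real.sqrt (f θ) - k' / Real.sqrt (f θ) with hg
  have hgc : Continuous g := hsqc.sub hinvc
  have hgrc : Continuous fun θ => g (π/2 - θ) := hgc.comp (continuous_const.sub continuous_id)
  -- E - k' K = ∫ g
  have hEKsub : ellipticE κ - k' * ellipticK κ = ∫ θ in (0:ℝ)..(π/2), g θ := by
    rw [hE, hK, ← intervalIntegral.integral_sub hI1 hI2]
  -- E + k' K = ∫ (√f + k'/√f)
  have hEKadd : ellipticE κ + k' * ellipticK κ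
      = ∫ θ in (0:ℝ)..(π/2), (Real.sqrt (f θ) + k' / Real.sqrt (f θ)) := by
    rw [hE, hK, ← intervalIntegral.integral_add hI1 hI2]
  -- reflection identity
  have hrefl : (∫ θ in (0:ℝ)..(π/2), g θ) = ∫ θ in (0:ℝ)..(π/2), g (π/2 - θ) := by
    rw [intervalIntegral.integral_comp_sub_left g (π/2)]
    norm_num
  -- double integral
  have hdouble : 2 * (ellipticE κ - k' * ellipticK κ)
      = ∫ θ in (0:ℝ)..(π/2), (g θ + g (π/2 - θ)) := by
    rw [intervalIntegral.integral_add (hgc.intervalIntegrable _ _)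
      (hgrc.intervalIntegrable _ _), hEKsub, ← hrefl]
    ring
  -- pointwise positivity of the symmetrized integrand
  have hptwise : ∀ θ ∈ Set.Ioo (0:ℝ) (π/2), 0 < g θ + g (π/2 - θ) := by
    intro θ ⟨hθ0, hθ1⟩
    have hsin : 0 < Real.sin θ := Real.sin_pos_of_pos_of_lt_pi hθ0 (by linarith [Real.pi_pos])
    have hcos : 0 < Real.cos θ := Real.cos_pos_of_mem_Ioo ⟨by linarith [Real.pi_pos], hθ1⟩
    set a := Real.sqrt (f θ) with ha
    set b := Real.sqrt (f (π/2 - θ)) with hb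
    have hapos : 0 < a := hsqpos θ
    have hbpos : 0 < b := hsqpos _
    have hpyth : Real.sin θ^2 + Real.cos θ^2 = 1 := Real.sin_sq_add_cos_sq θ
    have hident : f θ * f (π/2 - θ)
        = 1 - κ^2 + κ^4 * (Real.sin θ * Real.cos θ)^2 := by
      simp only [hf, Real.sin_pi_div_two_sub]
      linear_combination (-(κ^2)) * hpyth
    have hprod : 1 - κ^2 < f θ * f (π/2 - θ) := by
      rw [hident]
      have : 0 < κ^4 * (Real.sin θ * Real.cos θ)^2 := by positivity
      linarith
    have hab : k' < a * b := by
      rw [ha, hb, ← Real.sqrt_mul (hfpos θ).le]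
      exact Real.sqrt_lt_sqrt h1κ.le hprod
    have key : g θ + g (π/2 - θ) = (a + b) * (a * b - k') / (a * b) := by
      simp only [hg, ← ha, ← hb]
      field_simp
      ring
    rw [key]
    exact div_pos (mul_pos (by linarith) (by linarith)) (mul_pos hapos hbpos)
  -- conclude E - k'K > 0
  have hsubpos : 0 < ellipticE κ - k' * ellipticK κ := by
    have hpos : 0 < ∫ θ in (0:ℝ)..(π/2), (g θ + g (π/2 - θ)) :=
      intervalIntegral.intervalIntegral_pos_of_pos_on
        ((hgc.add hgrc).intervalIntegrable _ _) hptwise hpi2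
    rw [← hdouble] at hpos
    linarith
  -- E + k'K > 0
  have haddpos : 0 < ellipticE κ + k' * ellipticK κ := by
    rw [hEKadd]
    apply intervalIntegral.intervalIntegral_pos_of_pos_on
      ((hsqc.add hinvc).intervalIntegrable _ _) _ hpi2
    intro θ _
    have h1' := hsqpos θ
    have h2' : 0 < k' / Real.sqrt (f θ) := div_pos hk'pos (hsqpos θ)
    show 0 < Real.sqrt (f θ) + k' / Real.sqrt (f θ)
    linarith
  nlinarith [mul_pos hsubpos haddpos, hk'sq]
end

section
/- For every κ ∈ (0,1), (2-κ²)E(κ) - 2(1-κ²)K(κ) > 0, where K and E are the complete elliptic integrals of the first and second kind. -/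
open Real

/-- For every `κ ∈ (0,1)`, `(2-κ²)E(κ) - 2(1-κ²)K(κ) > 0`. -/
theorem elliptic_denominator_pos (κ : ℝ) (hκ : κ ∈ Set.Ioo (0:ℝ) 1) :
    (2 - κ^2) * ellipticE κ - 2*(1 - κ^2) * ellipticK κ > 0 := by
  obtain ⟨hκ0, hκ1⟩ := hκ
  have hκ2 : κ^2 < 1 := by nlinarith
  set u : ℝ → ℝ := fun θ => 1 - κ^2 * (Real.sin θ)^2 with hu_def
  have hu_pos : ∀ θ : ℝ, 0 < u θ := by
    intro θ
    have h1 : (Real.sin θ)^2 ≤ 1 := by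
      nlinarith [Real.sin_le_one θ, Real.neg_one_le_sin θ]
    simp only [hu_def]
    nlinarith [sq_nonneg κ, sq_nonneg (Real.sin θ)]
  have hsu_pos : ∀ θ : ℝ, 0 < Real.sqrt (u θ) := fun θ => Real.sqrt_pos.mpr (hu_pos θ)
  have hcont_u : Continuous u := by fun_prop
  have hcont_su : Continuous (fun θ => Real.sqrt (u θ)) := hcont_u.sqrt
  have hcont_inv : Continuous (fun θ => 1 / Real.sqrt (u θ)) :=
    continuous_const.div hcont_su (fun θ => (hsu_pos θ).ne')
  set f : ℝ → ℝ := fun θ =>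
    (2 - κ^2) * Real.sqrt (u θ) - 2*(1-κ^2) * (1 / Real.sqrt (u θ)) with hf_def
  set h : ℝ → ℝ := fun θ =>
    3 * κ^4 * ((Real.sin θ)^2 * (Real.cos θ)^2) / Real.sqrt (u θ) with hh_def
  set g : ℝ → ℝ := fun θ => κ^2 * (Real.sin θ * Real.cos θ * Real.sqrt (u θ)) with hg_def
  have hcont_f : Continuous f := by
    apply Continuous.sub
    · exact continuous_const.mul hcont_su
    · exact continuous_const.mul hcont_inv
  have hcont_h : Continuous h := by
    apply Continuous.div
    · fun_prop
    · exact hcont_su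
    · exact fun θ => (hsu_pos θ).ne'
  -- derivative identity
  have hderiv : ∀ θ : ℝ, HasDerivAt g (f θ - h θ) θ := by
    intro θ
    have hs : HasDerivAt Real.sin (Real.cos θ) θ := Real.hasDerivAt_sin θ
    have hc : HasDerivAt Real.cos (-Real.sin θ) θ := Real.hasDerivAt_cos θ
    have hu' : HasDerivAt u (-(κ^2 * (2 * Real.sin θ ^ 1 * Real.cos θ))) θ := by
      have : HasDerivAt (fun θ : ℝ => (Real.sin θ)^2) (2 * Real.sin θ ^ 1 * Real.cos θ) θ :=
        hs.pow 2
      simpa [hu_def] using (this.const_mul (κ^2)).const_sub 1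
    have hsu : HasDerivAt (fun θ => Real.sqrt (u θ))
        (-(κ^2 * (2 * Real.sin θ ^ 1 * Real.cos θ)) / (2 * Real.sqrt (u θ))) θ :=
      hu'.sqrt (hu_pos θ).ne'
    have hgder : HasDerivAt g
        (κ^2 * ((Real.cos θ * Real.cos θ + Real.sin θ * (-Real.sin θ)) * Real.sqrt (u θ)
          + Real.sin θ * Real.cos θ *
            (-(κ^2 * (2 * Real.sin θ ^ 1 * Real.cos θ)) / (2 * Real.sqrt (u θ))))) θ := by
      exact (((hs.mul hc).mul hsu).const_mul (κ^2))
    convert hgder using 1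
    have hsq : Real.sqrt (u θ) * Real.sqrt (u θ) = u θ :=
      Real.mul_self_sqrt (hu_pos θ).le
    have hne : Real.sqrt (u θ) ≠ 0 := (hsu_pos θ).ne'
    have hinv : Real.sqrt (u θ) * (Real.sqrt (u θ))⁻¹ = 1 := mul_inv_cancel₀ hne
    have hpy : (Real.sin θ)^2 + (Real.cos θ)^2 = 1 := Real.sin_sq_add_cos_sq θ
    simp only [hf_def, hh_def, hu_def] at *
    linear_combination
      (-((2 - κ^2) - κ^2 * ((Real.cos θ)^2 - (Real.sin θ)^2)) *
        Real.sqrt (1 - κ^2 * (Real.sin θ)^2)) * hinv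
      + (((2 - κ^2) - κ^2 * ((Real.cos θ)^2 - (Real.sin θ)^2)) *
        (Real.sqrt (1 - κ^2 * (Real.sin θ)^2))⁻¹) * hsq
      - (Real.sqrt (1 - κ^2 * (Real.sin θ)^2))⁻¹ * (κ^2 + κ^4 * (Real.sin θ)^2) * hpy
  have hπ : (0:ℝ) < π/2 := by positivity
  -- fundamental theorem
  have hfsub : IntervalIntegrable (fun θ => f θ - h θ) MeasureTheory.volume 0 (π/2) :=
    (hcont_f.sub hcont_h).intervalIntegrable 0 (π/2)
  have key : ∫ θ in (0:ℝ)..(π/2), (f θ - h θ) = g (π/2) - g 0 :=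
    intervalIntegral.integral_eq_sub_of_hasDerivAt (fun θ _ => hderiv θ) hfsub
  have hg0 : g 0 = 0 := by simp [hg_def]
  have hgπ : g (π/2) = 0 := by simp [hg_def]
  have hint_f : IntervalIntegrable f MeasureTheory.volume 0 (π/2) :=
    hcont_f.intervalIntegrable 0 (π/2)
  have hint_h : IntervalIntegrable h MeasureTheory.volume 0 (π/2) :=
    hcont_h.intervalIntegrable 0 (π/2)
  have hsplit : (∫ θ in (0:ℝ)..(π/2), f θ) = ∫ θ in (0:ℝ)..(π/2), h θ := by
    have := intervalIntegral.integral_sub hint_f hint_h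
    rw [key, hg0, hgπ] at this
    linarith
  -- positivity of ∫ h
  have hpos : 0 < ∫ θ in (0:ℝ)..(π/2), h θ := by
    apply intervalIntegral.intervalIntegral_pos_of_pos_on hint_h _ hπ
    intro x hx
    obtain ⟨hx0, hx1⟩ := hx
    have hsx : 0 < Real.sin x := Real.sin_pos_of_pos_of_lt_pi hx0 (by linarith [Real.pi_pos])
    have hcx : 0 < Real.cos x := Real.cos_pos_of_mem_Ioo ⟨by linarith [Real.pi_pos], hx1⟩
    have := hsu_pos x
    simp only [hh_def]
    positivity
  -- assemble
  have hE : ellipticE κ = ∫ θ in (0:ℝ)..(π/2), Real.sqrt (u θ) := rfl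
  have hK : ellipticK κ = ∫ θ in (0:ℝ)..(π/2), 1 / Real.sqrt (u θ) := rfl
  have hintE : IntervalIntegrable (fun θ => Real.sqrt (u θ)) MeasureTheory.volume 0 (π/2) :=
    hcont_su.intervalIntegrable 0 (π/2)
  have hintK : IntervalIntegrable (fun θ => 1 / Real.sqrt (u θ)) MeasureTheory.volume 0 (π/2) :=
    hcont_inv.intervalIntegrable 0 (π/2)
  have hlhs : (2 - κ^2) * ellipticE κ - 2*(1 - κ^2) * ellipticK κ
      = ∫ θ in (0:ℝ)..(π/2), f θ := by
    rw [hE, hK, ← intervalIntegral.integral_const_mul, ← intervalIntegral.integral_const_mul,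
      ← intervalIntegral.integral_sub (hintE.const_mul _) (hintK.const_mul _)]
  rw [hlhs, hsplit]
  exact hpos
end

section
/- For every κ ∈ (0,1), (2-κ²)E(κ)K(κ) - 2(1-κ²)K(κ)² > E(κ)² - (1-κ²)K(κ)², where K and E are the complete elliptic integrals of the first and second kind. Equivalently, ((2-κ²)EK - 2(1-κ²)K²)/(E² - (1-κ²)K²) > 1. -/
open Real

namespace EllipticAux

open MeasureTheory intervalIntegral Set

/-- The function under the square roots. -/
noncomputable def tf (κ θ : ℝ) : ℝ := 1 - κ^2 * (Real.sin θ)^2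

lemma tf_lb {κ : ℝ} (θ : ℝ) : 1 - κ^2 ≤ tf κ θ := by
  have h := Real.sin_sq_le_one θ
  have : κ^2 * (Real.sin θ)^2 ≤ κ^2 * 1 := by nlinarith [sq_nonneg κ]
  unfold tf; nlinarith

lemma tf_pos {κ : ℝ} (hκ : κ ∈ Set.Ioo (0:ℝ) 1) (θ : ℝ) : 0 < tf κ θ := by
  have := tf_lb (κ := κ) θ
  nlinarith [hκ.1, hκ.2]

lemma st_pos {κ : ℝ} (hκ : κ ∈ Set.Ioo (0:ℝ) 1) (θ : ℝ) : 0 < Real.sqrt (tf κ θ) :=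
  Real.sqrt_pos.mpr (tf_pos hκ θ)

lemma st_sq {κ : ℝ} (hκ : κ ∈ Set.Ioo (0:ℝ) 1) (θ : ℝ) :
    Real.sqrt (tf κ θ) ^ 2 = tf κ θ := Real.sq_sqrt (tf_pos hκ θ).le

lemma cont_tf {κ : ℝ} : Continuous (tf κ) := by
  unfold tf; fun_prop

lemma cont_st {κ : ℝ} : Continuous (fun θ => Real.sqrt (tf κ θ)) :=
  Real.continuous_sqrt.comp cont_tf

lemma intble_st {κ : ℝ} (a b : ℝ) :
    IntervalIntegrable (fun θ => Real.sqrt (tf κ θ)) volume a b :=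
  cont_st.intervalIntegrable a b

lemma intble_inv_st {κ : ℝ} (hκ : κ ∈ Set.Ioo (0:ℝ) 1) (a b : ℝ) :
    IntervalIntegrable (fun θ => 1 / Real.sqrt (tf κ θ)) volume a b :=
  (continuous_const.div cont_st (fun θ => (st_pos hκ θ).ne')).intervalIntegrable a b

lemma intble_i3 {κ : ℝ} (hκ : κ ∈ Set.Ioo (0:ℝ) 1) (a b : ℝ) :
    IntervalIntegrable (fun θ => 1 / (tf κ θ * Real.sqrt (tf κ θ))) volume a b :=
  (continuous_const.div (cont_tf.mul cont_st)
    (fun θ => (mul_pos (tf_pos hκ θ) (st_pos hκ θ)).ne')).intervalIntegrable a b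

lemma sq_expand (t S q lam : ℝ) (hq : q ^ 2 = S) (hs : S ^ 2 = t) :
    ((t - lam) / (S * q))^2 = S - (2*lam) * (1 / S) + lam^2 * (1 / (t * S)) := by
  rcases eq_or_ne S 0 with h | h
  · have ht : t = 0 := by rw [← hs, h]; ring
    simp [h, ht]
  · have hq0 : q ≠ 0 := fun hc => h (by rw [← hq, hc]; ring)
    have ht0 : t ≠ 0 := by rw [← hs]; exact pow_ne_zero 2 h
    subst hs
    rw [div_pow, mul_pow, hq]
    field_simp
    ring

/-- The third elliptic-type integral `∫ (1-κ² sin²)^{-3/2}`. -/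
noncomputable def I3 (κ : ℝ) : ℝ :=
  ∫ θ in (0:ℝ)..(π/2), 1 / (tf κ θ * Real.sqrt (tf κ θ))

lemma hasDerivAt_F {κ : ℝ} (hκ : κ ∈ Set.Ioo (0:ℝ) 1) (θ : ℝ) :
    HasDerivAt (fun x => κ^2 * (Real.sin x * Real.cos x) / Real.sqrt (tf κ x))
      (Real.sqrt (tf κ θ) - (1 - κ^2) * (1 / (tf κ θ * Real.sqrt (tf κ θ)))) θ := by
  have hpos : ∀ θ, 0 < tf κ θ := tf_pos hκ
  have ht : HasDerivAt (fun x => tf κ x) (-(κ^2 * (2 * Real.sin θ * Real.cos θ))) θ := by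
    have h1 : HasDerivAt (fun x : ℝ => (Real.sin x)^2) (2 * Real.sin θ * Real.cos θ) θ := by
      have := (Real.hasDerivAt_sin θ).pow 2
      refine this.congr_deriv ?_
      norm_num
    have := (h1.const_mul (κ^2)).const_sub 1
    simpa [tf, mul_comm, mul_assoc, mul_left_comm] using this
  have hst : HasDerivAt (fun x => Real.sqrt (tf κ x))
      (-(κ^2 * (2 * Real.sin θ * Real.cos θ)) / (2 * Real.sqrt (tf κ θ))) θ :=
    ht.sqrt (hpos θ).ne'
  have hnum : HasDerivAt (fun x => κ^2 * (Real.sin x * Real.cos x))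
      (κ^2 * (Real.cos θ * Real.cos θ + Real.sin θ * -Real.sin θ)) θ :=
    ((Real.hasDerivAt_sin θ).mul (Real.hasDerivAt_cos θ)).const_mul _
  have hF := hnum.div hst (Real.sqrt_pos.mpr (hpos θ)).ne'
  refine hF.congr_deriv ?_
  have hstv : Real.sqrt (tf κ θ) ^ 2 = tf κ θ := Real.sq_sqrt (hpos θ).le
  have hstp : (0:ℝ) < Real.sqrt (tf κ θ) := Real.sqrt_pos.mpr (hpos θ)
  have hpyth : Real.sin θ ^ 2 + Real.cos θ ^ 2 = 1 := Real.sin_sq_add_cos_sq θ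
  have htv : tf κ θ = 1 - κ^2 * (Real.sin θ)^2 := rfl
  field_simp [hstp.ne', (hpos θ).ne']
  rw [hstv, htv, show Real.cos θ ^ 2 = 1 - Real.sin θ ^ 2 by linarith]
  ring

/-- The key FTC identity `E = (1-κ²) I₃`. -/
lemma E_eq_I3 {κ : ℝ} (hκ : κ ∈ Set.Ioo (0:ℝ) 1) : ellipticE κ = (1 - κ^2) * I3 κ := by
  have hint : IntervalIntegrable
      (fun θ => Real.sqrt (tf κ θ) - (1 - κ^2) * (1 / (tf κ θ * Real.sqrt (tf κ θ))))
      volume 0 (π/2) :=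
    (intble_st 0 (π/2)).sub ((intble_i3 hκ 0 (π/2)).const_mul _)
  have h := integral_eq_sub_of_hasDerivAt (f := fun x => κ^2 * (Real.sin x * Real.cos x) / Real.sqrt (tf κ x))
    (a := (0:ℝ)) (b := π/2) (fun θ _ => hasDerivAt_F hκ θ) hint
  have h0 : (∫ θ in (0:ℝ)..(π/2),
      (Real.sqrt (tf κ θ) - (1 - κ^2) * (1 / (tf κ θ * Real.sqrt (tf κ θ))))) = 0 := by
    rw [h]
    simp [Real.cos_pi_div_two, Real.sin_zero]
  rw [integral_sub (intble_st 0 (π/2)) ((intble_i3 hκ 0 (π/2)).const_mul _),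
    intervalIntegral.integral_const_mul] at h0
  have hE : ellipticE κ = ∫ θ in (0:ℝ)..(π/2), Real.sqrt (tf κ θ) := rfl
  rw [hE, I3]
  linarith

lemma K_eq {κ : ℝ} : ellipticK κ = ∫ θ in (0:ℝ)..(π/2), 1 / Real.sqrt (tf κ θ) := rfl

lemma I3_pos {κ : ℝ} (hκ : κ ∈ Set.Ioo (0:ℝ) 1) : 0 < I3 κ :=
  intervalIntegral_pos_of_pos (intble_i3 hκ 0 (π/2))
    (fun θ => div_pos one_pos (mul_pos (tf_pos hκ θ) (st_pos hκ θ))) Real.pi_div_two_pos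

lemma K_pos {κ : ℝ} (hκ : κ ∈ Set.Ioo (0:ℝ) 1) : 0 < ellipticK κ := by
  rw [K_eq]
  exact intervalIntegral_pos_of_pos (intble_inv_st hκ 0 (π/2))
    (fun θ => div_pos one_pos (st_pos hκ θ)) Real.pi_div_two_pos

/-- Strict Cauchy–Schwarz: `K² < E·I₃`. -/
lemma K_sq_lt {κ : ℝ} (hκ : κ ∈ Set.Ioo (0:ℝ) 1) :
    (ellipticK κ)^2 < ellipticE κ * I3 κ := by
  set lam := ellipticK κ / I3 κ with hlam
  set h : ℝ → ℝ := fun θ =>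
    (tf κ θ - lam) / (Real.sqrt (tf κ θ) * Real.sqrt (Real.sqrt (tf κ θ))) with hh
  have hq_pos : ∀ θ, 0 < Real.sqrt (Real.sqrt (tf κ θ)) :=
    fun θ => Real.sqrt_pos.mpr (st_pos hκ θ)
  have hden_ne : ∀ θ, Real.sqrt (tf κ θ) * Real.sqrt (Real.sqrt (tf κ θ)) ≠ 0 :=
    fun θ => (mul_pos (st_pos hκ θ) (hq_pos θ)).ne'
  -- pointwise expansion of h²
  have hpt : ∀ θ, (h θ)^2 = Real.sqrt (tf κ θ) - (2*lam) * (1 / Real.sqrt (tf κ θ))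
      + lam^2 * (1 / (tf κ θ * Real.sqrt (tf κ θ))) := by
    intro θ
    have hq : Real.sqrt (Real.sqrt (tf κ θ)) ^ 2 = Real.sqrt (tf κ θ) :=
      Real.sq_sqrt (st_pos hκ θ).le
    have hs : Real.sqrt (tf κ θ) ^ 2 = tf κ θ := st_sq hκ θ
    have h1 : (0:ℝ) < Real.sqrt (tf κ θ) := st_pos hκ θ
    have h2 : (0:ℝ) < tf κ θ := tf_pos hκ θ
    rw [hh]
    exact sq_expand _ _ _ _ hq hs
  -- the integral of h² equals E - 2 lam K + lam² I3
  have hint_h2 : IntervalIntegrable (fun θ => (h θ)^2) volume 0 (π/2) := by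
    apply Continuous.intervalIntegrable
    apply Continuous.pow
    exact (cont_tf.sub continuous_const).div
      (cont_st.mul (Real.continuous_sqrt.comp cont_st)) hden_ne
  have hval : (∫ θ in (0:ℝ)..(π/2), (h θ)^2)
      = ellipticE κ - (2*lam) * ellipticK κ + lam^2 * I3 κ := by
    have : (fun θ => (h θ)^2) = fun θ =>
        (Real.sqrt (tf κ θ) - (2*lam) * (1 / Real.sqrt (tf κ θ)))
        + lam^2 * (1 / (tf κ θ * Real.sqrt (tf κ θ))) := by
      funext θ; rw [hpt θ]
    rw [this, integral_add ((intble_st 0 (π/2)).sub ((intble_inv_st hκ 0 (π/2)).const_mul _))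
        ((intble_i3 hκ 0 (π/2)).const_mul _),
      integral_sub (intble_st 0 (π/2)) ((intble_inv_st hκ 0 (π/2)).const_mul _),
      intervalIntegral.integral_const_mul, intervalIntegral.integral_const_mul, K_eq, I3]
    rfl
  -- positivity of the integral of h²
  have hZ : Set.Subsingleton {θ | θ ∈ Set.Ioc (0:ℝ) (π/2) ∧ tf κ θ = lam} := by
    rintro x ⟨hx, hx2⟩ y ⟨hy, hy2⟩
    have hκ0 : κ^2 ≠ 0 := pow_ne_zero 2 (ne_of_gt hκ.1)
    have hsin : (Real.sin x)^2 = (Real.sin y)^2 := by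
      have : κ^2 * (Real.sin x)^2 = κ^2 * (Real.sin y)^2 := by
        have := hx2.trans hy2.symm
        unfold tf at this; linarith
      exact mul_left_cancel₀ hκ0 this
    have hsx : 0 ≤ Real.sin x := Real.sin_nonneg_of_nonneg_of_le_pi hx.1.le
      (hx.2.trans (by linarith [Real.pi_pos]))
    have hsy : 0 ≤ Real.sin y := Real.sin_nonneg_of_nonneg_of_le_pi hy.1.le
      (hy.2.trans (by linarith [Real.pi_pos]))
    have hsin' : Real.sin x = Real.sin y := by
      nlinarith [hsin, hsx, hsy]
    exact Real.injOn_sin ⟨by linarith [hx.1, Real.pi_pos], hx.2⟩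
      ⟨by linarith [hy.1, Real.pi_pos], hy.2⟩ hsin'
  have hZ0 : volume {θ | θ ∈ Set.Ioc (0:ℝ) (π/2) ∧ tf κ θ = lam} = 0 :=
    hZ.measure_zero _
  have hpos_int : 0 < ∫ θ in (0:ℝ)..(π/2), (h θ)^2 := by
    rw [integral_pos_iff_support_of_nonneg_ae
      (Filter.Eventually.of_forall (fun θ => sq_nonneg (h θ))) hint_h2]
    refine ⟨Real.pi_div_two_pos, ?_⟩
    have hsub : Set.Ioc (0:ℝ) (π/2) \ {θ | θ ∈ Set.Ioc (0:ℝ) (π/2) ∧ tf κ θ = lam}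
        ⊆ Function.support (fun θ => (h θ)^2) ∩ Set.Ioc 0 (π/2) := by
      rintro θ ⟨hθ, hθZ⟩
      refine ⟨?_, hθ⟩
      have hne : tf κ θ ≠ lam := fun hc => hθZ ⟨hθ, hc⟩
      have : h θ ≠ 0 := div_ne_zero (sub_ne_zero.mpr hne) (hden_ne θ)
      simpa [Function.mem_support] using pow_ne_zero 2 this
    calc (0:ENNReal) < volume (Set.Ioc (0:ℝ) (π/2)) := by
          rw [Real.volume_Ioc]
          exact ENNReal.ofReal_pos.mpr (by simpa using Real.pi_div_two_pos)
      _ = volume (Set.Ioc (0:ℝ) (π/2) \ {θ | θ ∈ Set.Ioc (0:ℝ) (π/2) ∧ tf κ θ = lam}) :=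
          (measure_diff_null hZ0).symm
      _ ≤ volume (Function.support (fun θ => (h θ)^2) ∩ Set.Ioc 0 (π/2)) :=
          measure_mono hsub
  -- conclude
  have hI3 : 0 < I3 κ := I3_pos hκ
  have hfinal : 0 < ellipticE κ - (2*lam) * ellipticK κ + lam^2 * I3 κ := by
    rw [← hval]; exact hpos_int
  have hexp : (ellipticE κ - (2*lam) * ellipticK κ + lam^2 * I3 κ) * I3 κ
      = ellipticE κ * I3 κ - (ellipticK κ)^2 := by
    rw [hlam]; field_simp; ring
  nlinarith [mul_pos hfinal hI3]

/-- `E - (1-κ²) K > 0`. -/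
lemma A_pos {κ : ℝ} (hκ : κ ∈ Set.Ioo (0:ℝ) 1) :
    0 < ellipticE κ - (1 - κ^2) * ellipticK κ := by
  have : ellipticE κ - (1 - κ^2) * ellipticK κ
      = ∫ θ in (0:ℝ)..(π/2), (Real.sqrt (tf κ θ) - (1-κ^2) * (1 / Real.sqrt (tf κ θ))) := by
    rw [integral_sub (intble_st 0 (π/2)) ((intble_inv_st hκ 0 (π/2)).const_mul _),
      intervalIntegral.integral_const_mul, K_eq]
    rfl
  rw [this]
  apply intervalIntegral_pos_of_pos_on
    ((intble_st 0 (π/2)).sub ((intble_inv_st hκ 0 (π/2)).const_mul _))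
  · intro θ hθ
    have hc : 0 < Real.cos θ := Real.cos_pos_of_mem_Ioo
      ⟨by linarith [hθ.1, Real.pi_pos], hθ.2⟩
    have hlt : 1 - κ^2 < tf κ θ := by
      have hs1 : (Real.sin θ)^2 < 1 := by
        have := Real.sin_sq_add_cos_sq θ
        nlinarith
      have hk2 : 0 < κ^2 := pow_pos hκ.1 2
      unfold tf
      nlinarith [mul_lt_mul_of_pos_left hs1 hk2]
    have hst := st_pos hκ θ
    have hsq := st_sq hκ θ
    have h1 : (1 - κ^2) * (1 / Real.sqrt (tf κ θ)) < tf κ θ * (1 / Real.sqrt (tf κ θ)) := by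
      apply mul_lt_mul_of_pos_right hlt (by positivity)
    have h2 : tf κ θ * (1 / Real.sqrt (tf κ θ)) = Real.sqrt (tf κ θ) := by
      field_simp
      exact hsq.symm
    linarith
  · exact Real.pi_div_two_pos

/-- `K - E > 0`. -/
lemma B_pos {κ : ℝ} (hκ : κ ∈ Set.Ioo (0:ℝ) 1) : 0 < ellipticK κ - ellipticE κ := by
  have : ellipticK κ - ellipticE κ
      = ∫ θ in (0:ℝ)..(π/2), (1 / Real.sqrt (tf κ θ) - Real.sqrt (tf κ θ)) := by
    rw [integral_sub (intble_inv_st hκ 0 (π/2)) (intble_st 0 (π/2)), K_eq]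
    rfl
  rw [this]
  apply intervalIntegral_pos_of_pos_on
    ((intble_inv_st hκ 0 (π/2)).sub (intble_st 0 (π/2)))
  · intro θ hθ
    have hsin : 0 < Real.sin θ := Real.sin_pos_of_pos_of_lt_pi hθ.1
      (hθ.2.trans_le (by linarith [Real.pi_pos]))
    have hlt : tf κ θ < 1 := by
      have hk2 : 0 < κ^2 := pow_pos hκ.1 2
      unfold tf
      nlinarith [mul_pos hk2 (mul_pos hsin hsin)]
    have hst := st_pos hκ θ
    have hsq := st_sq hκ θ
    have h1 : Real.sqrt (tf κ θ) < 1 := by nlinarith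
    have : Real.sqrt (tf κ θ) < 1 / Real.sqrt (tf κ θ) := by
      rw [lt_div_iff₀ hst]; nlinarith
    linarith
  · exact Real.pi_div_two_pos

end EllipticAux

/-- For every `κ ∈ (0,1)`,
`(2-κ²)E(κ)K(κ) - 2(1-κ²)K(κ)² > E(κ)² - (1-κ²)K(κ)²`, equivalently the ratio
exceeds 1. -/
theorem elliptic_ratio_gt_one (κ : ℝ) (hκ : κ ∈ Set.Ioo (0:ℝ) 1) :
    (2 - κ^2) * ellipticE κ * ellipticK κ - 2*(1 - κ^2) * (ellipticK κ)^2
      > (ellipticE κ)^2 - (1 - κ^2) * (ellipticK κ)^2 ∧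
    ((2 - κ^2) * ellipticE κ * ellipticK κ - 2*(1 - κ^2) * (ellipticK κ)^2)
      / ((ellipticE κ)^2 - (1 - κ^2) * (ellipticK κ)^2) > 1 := by
  obtain ⟨hκ0, hκ1⟩ := hκ
  have hA := EllipticAux.A_pos ⟨hκ0, hκ1⟩
  have hB := EllipticAux.B_pos ⟨hκ0, hκ1⟩
  have hK2 := EllipticAux.K_sq_lt ⟨hκ0, hκ1⟩
  have hE_eq := EllipticAux.E_eq_I3 ⟨hκ0, hκ1⟩
  have h1κ : (0:ℝ) < 1 - κ^2 := by nlinarith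
  -- denominator positivity
  have hD : 0 < (ellipticE κ)^2 - (1 - κ^2) * (ellipticK κ)^2 := by
    have : (ellipticE κ)^2 = (1 - κ^2) * (ellipticE κ * EllipticAux.I3 κ) := by
      rw [hE_eq]; ring
    nlinarith [mul_lt_mul_of_pos_left hK2 h1κ]
  have hnum : (2 - κ^2) * ellipticE κ * ellipticK κ - 2*(1 - κ^2) * (ellipticK κ)^2
      > (ellipticE κ)^2 - (1 - κ^2) * (ellipticK κ)^2 := by
    nlinarith [mul_pos hA hB]
  exact ⟨hnum, (one_lt_div hD).mpr hnum⟩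
end
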